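/- Define λ_n(τ) := e^{−τ} Σ_{k=0}^{n} τ^k/k!. Suppose τ > ln 2, so that λ₀(τ) = e^{−τ} < 1/2. Then for all natural numbers a, b: λ_a(τ) + λ_b(τ) − 2·λ_a(τ)·λ_b(τ) < 1 − λ₀(τ), and moreover the supremum over all pairs (a, b) ∈ ℕ × ℕ of λ_a(τ) + λ_b(τ) − 2λ_a(τ)λ_b(τ) equals 1 − λ₀(τ). -/

import Mathlib

/-- The eigenvalues λ_n(τ) := e^{−τ} Σ_{k=0}^{n} τ^k/k! of the threshold-detection
operator R₁ in the number basis. -/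
noncomputable def lam (n : ℕ) (τ : ℝ) : ℝ :=
  Real.exp (-τ) * ∑ k ∈ Finset.range (n + 1), τ ^ k / k.factorial

lemma key_ineq {L x y : ℝ} (hL0 : 0 < L) (hLh : L < 1/2) (hx : L ≤ x) (hy : L ≤ y)
    (hx1 : x < 1) (hy1 : y < 1) : x + y - 2 * x * y < 1 - L := by
  rcases le_or_gt y (1/2) with h | h
  · nlinarith [mul_pos (sub_pos.2 hx1) (show (0:ℝ) < 1 - y - L by linarith),
      mul_nonneg (le_of_lt (lt_of_lt_of_le hL0 hx)) (sub_nonneg.2 hy)]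
  · nlinarith [mul_pos (show (0:ℝ) < 1 - 2*L by linarith) (sub_pos.2 hy1),
      mul_nonneg (sub_nonneg.2 hx) (show (0:ℝ) ≤ 2*y - 1 by linarith)]

lemma lam_zero (τ : ℝ) : lam 0 τ = Real.exp (-τ) := by simp [lam]

lemma lam_zero_le (τ : ℝ) (hτ : 0 ≤ τ) (n : ℕ) : lam 0 τ ≤ lam n τ := by
  rw [lam_zero, lam]
  have h1 : (1:ℝ) ≤ ∑ k ∈ Finset.range (n + 1), τ ^ k / k.factorial := by
    have := Finset.single_le_sum (f := fun k => τ ^ k / (k.factorial : ℝ))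
      (fun k _ => by positivity) (Finset.mem_range.2 (Nat.succ_pos n))
    simpa using this
  nlinarith [Real.exp_pos (-τ)]

lemma lam_lt_one (τ : ℝ) (hτ : 0 < τ) (n : ℕ) : lam n τ < 1 := by
  rw [lam]
  have h1 : ∑ k ∈ Finset.range (n + 1), τ ^ k / k.factorial < Real.exp τ := by
    have h2 := Real.sum_le_exp_of_nonneg hτ.le (n + 2)
    have h3 : ∑ k ∈ Finset.range (n + 1), τ ^ k / k.factorial
        < ∑ k ∈ Finset.range (n + 2), τ ^ k / k.factorial := by
      rw [Finset.sum_range_succ (n := n + 1)]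
      have : (0:ℝ) < τ ^ (n+1) / (n+1).factorial := by positivity
      linarith
    linarith
  calc Real.exp (-τ) * ∑ k ∈ Finset.range (n + 1), τ ^ k / k.factorial
      < Real.exp (-τ) * Real.exp τ := by
        exact (mul_lt_mul_iff_right₀ (Real.exp_pos _)).2 h1
    _ = 1 := by rw [← Real.exp_add]; simp

lemma lam_tendsto (τ : ℝ) :
    Filter.Tendsto (fun n => lam n τ) Filter.atTop (nhds 1) := by
  have hsum : HasSum (fun k : ℕ => τ ^ k / (k.factorial : ℝ)) (Real.exp τ) := by
    rw [Real.exp_eq_exp_ℝ]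
    exact NormedSpace.expSeries_div_hasSum_exp τ
  have h1 : Filter.Tendsto
      (fun n => ∑ k ∈ Finset.range n, τ ^ k / (k.factorial : ℝ))
      Filter.atTop (nhds (Real.exp τ)) := hsum.tendsto_sum_nat
  have h2 : Filter.Tendsto
      (fun n => ∑ k ∈ Finset.range (n + 1), τ ^ k / (k.factorial : ℝ))
      Filter.atTop (nhds (Real.exp τ)) := h1.comp (Filter.tendsto_add_atTop_nat 1)
  have h3 := h2.const_mul (Real.exp (-τ))
  have : Real.exp (-τ) * Real.exp τ = 1 := by rw [← Real.exp_add]; simp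
  rw [this] at h3
  exact h3

/-- If τ > ln 2 (so λ₀ < 1/2), then for all a, b ∈ ℕ,
λ_a + λ_b − 2λ_aλ_b < 1 − λ₀, and the supremum over all pairs equals 1 − λ₀. -/
theorem gain_eigenvalues_range (τ : ℝ) (hτ : Real.log 2 < τ) :
    (∀ a b : ℕ, lam a τ + lam b τ - 2 * lam a τ * lam b τ < 1 - lam 0 τ)
    ∧ (⨆ p : ℕ × ℕ, (lam p.1 τ + lam p.2 τ - 2 * lam p.1 τ * lam p.2 τ)) = 1 - lam 0 τ := by
  have hlog2 : 0 < Real.log 2 := Real.log_pos one_lt_two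
  have hτ0 : 0 < τ := hlog2.trans hτ
  have hL0 : 0 < lam 0 τ := by rw [lam_zero]; exact Real.exp_pos _
  have hLh : lam 0 τ < 1/2 := by
    rw [lam_zero]
    have : Real.exp (-τ) < Real.exp (-Real.log 2) := Real.exp_lt_exp.2 (by linarith)
    calc Real.exp (-τ) < Real.exp (-Real.log 2) := this
      _ = 1/2 := by rw [Real.exp_neg, Real.exp_log two_pos]; norm_num
  have h1 : ∀ a b : ℕ, lam a τ + lam b τ - 2 * lam a τ * lam b τ < 1 - lam 0 τ :=
    fun a b => key_ineq hL0 hLh (lam_zero_le τ hτ0.le a) (lam_zero_le τ hτ0.le b)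
      (lam_lt_one τ hτ0 a) (lam_lt_one τ hτ0 b)
  refine ⟨h1, ?_⟩
  have hbdd : BddAbove (Set.range fun p : ℕ × ℕ =>
      lam p.1 τ + lam p.2 τ - 2 * lam p.1 τ * lam p.2 τ) := by
    refine ⟨1 - lam 0 τ, ?_⟩
    rintro x ⟨p, rfl⟩
    exact (h1 p.1 p.2).le
  refine le_antisymm (ciSup_le fun p => (h1 p.1 p.2).le) ?_
  have htend : Filter.Tendsto
      (fun a => lam a τ + lam 0 τ - 2 * lam a τ * lam 0 τ)
      Filter.atTop (nhds (1 + lam 0 τ - 2 * 1 * lam 0 τ)) := by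
    have h := lam_tendsto τ
    exact ((h.add tendsto_const_nhds).sub ((h.const_mul 2).mul tendsto_const_nhds))
  have heq : 1 + lam 0 τ - 2 * 1 * lam 0 τ = 1 - lam 0 τ := by ring
  rw [heq] at htend
  exact le_of_tendsto htend (Filter.Eventually.of_forall fun a => le_ciSup hbdd (a, 0))
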